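/- arXiv:2508.15699 — 2 statements merged into one kernel-verified Lean document; each statement's English description precedes it below -/
import Mathlib

section
/- Let a : ℕ → ℂ be a sequence with a n ≠ 0 for all n and |a n| → ∞, and suppose there exist ε > 0 and Ψ ∈ [−π, π) such that no a n lies in the open sector S(Ψ, ε) := {r e^{iθ} : r > 0, θ ∈ (Ψ−ε, Ψ+ε) mod 2π}. Let A, B ∈ ℂ with A ≠ 0, and set λ n := A·a n + B; assume λ n ≠ 0 for all n. Then there exist Ψ′ ∈ [−π, π), ε′ > 0, and R > 0 such that: (1) no λ n lies in S(Ψ′, ε′); and (2) every z ∈ S(Ψ′, ε′) with |z| ≥ R can be written as z = A·w + B with w ∈ S(Ψ, ε). -/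
open Complex Filter Set MeasureTheory Asymptotics

noncomputable section

/-- Branch of the logarithm with imaginary part in `(Ψ - 2π, Ψ]`. -/
def logPsi (Ψ : ℝ) (w : ℂ) : ℂ :=
  Complex.log (w * Complex.exp (-((Ψ - Real.pi : ℝ) : ℂ) * Complex.I)) +
    ((Ψ - Real.pi : ℝ) : ℂ) * Complex.I

/-- `w ^ s` with branch cut along the ray of angle `Ψ`. -/
def cpowPsi (Ψ : ℝ) (w s : ℂ) : ℂ := Complex.exp (s * logPsi Ψ w)

/-- The open sector of half-opening `ε` around the ray of angle `Ψ` (arguments mod 2π). -/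
def sector (Ψ ε : ℝ) : Set ℂ :=
  {z | ∃ r θ : ℝ, 0 < r ∧ θ ∈ Set.Ioo (Ψ - ε) (Ψ + ε) ∧
    z = (r : ℂ) * Complex.exp ((θ : ℂ) * Complex.I)}

/-- Branch of the logarithm holomorphic on the sector around the angle `Ψ`,
with imaginary part in `(Ψ - π, Ψ + π]`. -/
def logSector (Ψ : ℝ) (z : ℂ) : ℂ :=
  Complex.log (z * Complex.exp (-(Ψ : ℂ) * Complex.I)) + (Ψ : ℂ) * Complex.I

/-- `z ^ β` using the sector branch of the logarithm. -/
def cpowSector (Ψ : ℝ) (z β : ℂ) : ℂ := Complex.exp (β * logSector Ψ z)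

/-- The filter `|z| → ∞` within the sector. -/
def atInfSector (Ψ ε : ℝ) : Filter ℂ :=
  Filter.comap (fun z : ℂ => ‖z‖) Filter.atTop ⊓ Filter.principal (sector Ψ ε)

/-- A sequence (indexed from 1) is admissible with exponent of convergence `α`. -/
structure Admissible (a : ℕ → ℂ) (α : ℝ) : Prop where
  abs_pos : 0 < ‖a 1‖
  abs_mono : ∀ n, 1 ≤ n → ‖a n‖ ≤ ‖a (n + 1)‖
  abs_tendsto : Filter.Tendsto (fun n => ‖a n‖) Filter.atTop Filter.atTop
  exponent : Filter.limsup
      (fun n : ℕ => ((Real.log n / Real.log (‖a n‖) : ℝ) : EReal))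
      Filter.atTop = (α : EReal)

/-- The `n`-th factor in a Hadamard product of genus `k - 1`. -/
def hadamardFactor (k : ℕ) (w : ℂ) : ℂ :=
  (1 - w) * Complex.exp (∑ j ∈ Finset.Icc 1 (k - 1), (1 / (j : ℂ)) * w ^ j)

end


section AuxSector

lemma mem_sector_iff {Ψ ε : ℝ} {z : ℂ} :
    z ∈ sector Ψ ε ↔ z ≠ 0 ∧ ∃ θ ∈ Set.Ioo (Ψ - ε) (Ψ + ε),
      z = (‖z‖ : ℂ) * Complex.exp ((θ : ℂ) * Complex.I) := by
  constructor
  · rintro ⟨r, θ, hr, hθ, rfl⟩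
    have habs : ‖(r:ℂ) * Complex.exp ((θ:ℂ)*Complex.I)‖ = r := by
      rw [norm_mul, Complex.norm_exp_ofReal_mul_I, Complex.norm_real, Real.norm_eq_abs, abs_of_pos hr, mul_one]
    refine ⟨?_, θ, hθ, by rw [habs]⟩
    intro h
    rw [h, norm_zero] at habs
    exact hr.ne habs
  · rintro ⟨hz, θ, hθ, hform⟩
    exact ⟨‖z‖, θ, norm_pos_iff.mpr hz, hθ, hform⟩

lemma sector_shift_subset (Ψ ε : ℝ) (k : ℤ) :
    sector (Ψ + 2*Real.pi*k) ε ⊆ sector Ψ ε := by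
  rintro z ⟨r, θ, hr, hθ, rfl⟩
  refine ⟨r, θ - 2*Real.pi*k, hr, ⟨by have := hθ.1; linarith, by have := hθ.2; linarith⟩, ?_⟩
  have h : ((θ:ℂ)) * Complex.I
      = (((θ - 2*Real.pi*k : ℝ)):ℂ) * Complex.I + (k:ℂ) * (2*Real.pi*Complex.I) := by
    push_cast; ring
  rw [h, Complex.exp_add, Complex.exp_int_mul_two_pi_mul_I, mul_one]

lemma sector_congr {Ψ₁ Ψ₂ ε : ℝ} (k : ℤ) (h : Ψ₁ = Ψ₂ + 2*Real.pi*k) :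
    sector Ψ₁ ε = sector Ψ₂ ε := by
  subst h
  refine subset_antisymm (sector_shift_subset _ _ _) ?_
  have := sector_shift_subset (Ψ₂ + 2*Real.pi*k) ε (-k)
  simpa using this

lemma mul_mem_sector {Ψ ε : ℝ} {c z : ℂ} (hc : c ≠ 0) (hz : z ∈ sector Ψ ε) :
    c * z ∈ sector (Ψ + Complex.arg c) ε := by
  obtain ⟨r, θ, hr, hθ, rfl⟩ := hz
  refine ⟨‖c‖ * r, θ + Complex.arg c,
    mul_pos (norm_pos_iff.mpr hc) hr,
    ⟨by have := hθ.1; linarith, by have := hθ.2; linarith⟩, ?_⟩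
  conv_lhs => rw [← Complex.norm_mul_exp_arg_mul_I c]
  rw [Complex.ofReal_add, add_mul, Complex.exp_add]
  push_cast
  ring

lemma sector_mono {Ψ ε₁ ε₂ : ℝ} (h : ε₁ ≤ ε₂) : sector Ψ ε₁ ⊆ sector Ψ ε₂ := by
  rintro z ⟨r, θ, hr, hθ, rfl⟩
  exact ⟨r, θ, hr, ⟨by have := hθ.1; linarith, by have := hθ.2; linarith⟩, rfl⟩

lemma shift_mem_sector {Ψ₀ δ s : ℝ} {B : ℂ} (hs : 0 < s) (hs1 : s ≤ 1)
    (harg : ∀ u : ℂ, dist u 1 < s → |Complex.arg u| < δ/2)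
    (z : ℂ) (hz : ‖B‖ / s + ‖B‖ + 1 ≤ ‖z‖)
    (θ : ℝ) (hθ : θ ∈ Set.Ioo (Ψ₀ - δ/2) (Ψ₀ + δ/2))
    (hform : z = (‖z‖ : ℂ) * Complex.exp ((θ : ℂ) * Complex.I)) :
    z - B ∈ sector Ψ₀ δ := by
  have hBnn : 0 ≤ ‖B‖ := norm_nonneg B
  have hBs : 0 ≤ ‖B‖ / s := by positivity
  have hzpos : 0 < ‖z‖ := by linarith
  have hz0 : z ≠ 0 := by
    intro h; rw [h, norm_zero] at hzpos; exact lt_irrefl _ hzpos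
  set u : ℂ := 1 - B / z with hu_def
  have hsub : ‖u - 1‖ = ‖B‖ / ‖z‖ := by
    have : u - 1 = -(B / z) := by rw [hu_def]; ring
    rw [this, norm_neg, norm_div]
  have hBz : ‖B‖ < s * ‖z‖ := by
    have hcan : s * (‖B‖ / s) = ‖B‖ := by
      field_simp
    nlinarith
  have hdist : dist u 1 < s := by
    rw [Complex.dist_eq, hsub, div_lt_iff₀ hzpos]
    linarith [hBz]
  have hargu : |Complex.arg u| < δ/2 := harg u hdist
  have hu0 : u ≠ 0 := by
    intro h
    rw [h] at hsub
    simp only [zero_sub, norm_neg, norm_one] at hsub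
    have : ‖B‖ / ‖z‖ < s := by rw [div_lt_iff₀ hzpos]; linarith
    rw [← hsub] at this
    linarith
  have hupos : 0 < ‖u‖ := norm_pos_iff.mpr hu0
  have hzu : z - B = z * u := by
    rw [hu_def]
    field_simp
  refine ⟨‖z‖ * ‖u‖, θ + Complex.arg u, mul_pos hzpos hupos,
    ⟨?_, ?_⟩, ?_⟩
  · have h1 := hθ.1
    have h2 := (abs_lt.mp hargu).1
    linarith
  · have h1 := hθ.2
    have h2 := (abs_lt.mp hargu).2
    linarith
  · rw [hzu]
    conv_lhs => rw [hform, ← Complex.norm_mul_exp_arg_mul_I u]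
    rw [Complex.ofReal_add, add_mul, Complex.exp_add]
    push_cast
    ring

end AuxSector

/-- **Persistence of the sector condition under linear transformations** (Lemma 4.1).
If no `a n` lies in the open sector `S(Ψ, ε)` and `λ n = A·a n + B` (with `A ≠ 0`, `λ n ≠ 0`),
then there are `Ψ′ ∈ [−π, π)`, `ε′ > 0` and `R > 0` such that no `λ n` lies in `S(Ψ′, ε′)` and,
outside the disk of radius `R`, the sector `S(Ψ′, ε′)` is contained in `A·S(Ψ, ε) + B`. -/
theorem sector_condition_of_linear (a : ℕ → ℂ) (ε Ψ : ℝ) (A B : ℂ)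
    (ha0 : ∀ n, a n ≠ 0)
    (htend : Filter.Tendsto (fun n => ‖a n‖) Filter.atTop Filter.atTop)
    (hε : 0 < ε) (hΨ : Ψ ∈ Set.Ico (-Real.pi) Real.pi)
    (hsector : ∀ n, a n ∉ sector Ψ ε)
    (hA : A ≠ 0) (hlam : ∀ n, A * a n + B ≠ 0) :
    ∃ Ψ' ∈ Set.Ico (-Real.pi) Real.pi, ∃ ε' : ℝ, 0 < ε' ∧ ∃ R : ℝ, 0 < R ∧
      (∀ n, A * a n + B ∉ sector Ψ' ε') ∧
      (∀ z ∈ sector Ψ' ε', R ≤ ‖z‖ → ∃ w ∈ sector Ψ ε, z = A * w + B) := by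
  have hπ3 : (3:ℝ) < Real.pi := Real.pi_gt_three
  have hApos : 0 < ‖A‖ := norm_pos_iff.mpr hA
  set Ψ₀ : ℝ := Ψ + Complex.arg A with hΨ₀def
  set δ : ℝ := min (ε/2) 1 with hδdef
  have hδpos : 0 < δ := lt_min (by linarith) one_pos
  have hδε2 : δ ≤ ε/2 := min_le_left _ _
  have hδ1 : δ ≤ 1 := min_le_right _ _
  have hcont : ContinuousAt Complex.arg 1 :=
    Complex.continuousAt_arg (by simp [Complex.mem_slitPlane_iff])
  obtain ⟨s₀, hs₀pos, hs₀⟩ := Metric.continuousAt_iff.mp hcont (δ/2) (by linarith)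
  set s : ℝ := min s₀ 1 with hsdef
  have hspos : 0 < s := lt_min hs₀pos one_pos
  have hs1 : s ≤ 1 := min_le_right _ _
  have harg : ∀ u : ℂ, dist u 1 < s → |Complex.arg u| < δ/2 := by
    intro u hu
    have := hs₀ (show dist u 1 < s₀ from lt_of_lt_of_le hu (min_le_left _ _))
    simpa [Complex.arg_one, Real.dist_eq] using this
  set R : ℝ := ‖B‖ / s + ‖B‖ + 1 with hRdef
  have hRpos : 0 < R := by positivity
  have key : ∀ z : ℂ, R ≤ ‖z‖ →
      ∀ θ : ℝ, θ ∈ Set.Ioo (Ψ₀ - δ/2) (Ψ₀ + δ/2) →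
      z = (‖z‖ : ℂ) * Complex.exp ((θ:ℂ) * Complex.I) →
      ∃ w ∈ sector Ψ ε, z = A * w + B := by
    intro z hzR θ hθ hform
    have hzB : z - B ∈ sector Ψ₀ δ := shift_mem_sector hspos hs1 harg z hzR θ hθ hform
    have hzB' : z - B ∈ sector Ψ₀ ε := sector_mono (by linarith) hzB
    refine ⟨A⁻¹ * (z - B), ?_, by field_simp; ring⟩
    have hmem := mul_mem_sector (inv_ne_zero hA) hzB'
    have harginv := Complex.arg_inv A
    by_cases hAπ : Complex.arg A = Real.pi
    · have heq : Ψ₀ + Complex.arg A⁻¹ = Ψ + 2*Real.pi*((1:ℤ):ℝ) := by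
        rw [harginv, if_pos hAπ, hΨ₀def, hAπ]; push_cast; ring
      rwa [sector_congr 1 heq] at hmem
    · have heq : Ψ₀ + Complex.arg A⁻¹ = Ψ + 2*Real.pi*((0:ℤ):ℝ) := by
        rw [harginv, if_neg hAπ, hΨ₀def]; push_cast; ring
      rwa [sector_congr 0 heq] at hmem
  have hev : ∀ᶠ n in Filter.atTop, R ≤ ‖A * a n + B‖ := by
    have h1 : ∀ᶠ n in Filter.atTop, (R + ‖B‖)/‖A‖ ≤ ‖a n‖ :=
      htend.eventually_ge_atTop _
    filter_upwards [h1] with n hn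
    have h2 : R + ‖B‖ ≤ ‖A‖ * ‖a n‖ := by
      calc R + ‖B‖ ≤ ‖a n‖ * ‖A‖ := (div_le_iff₀ hApos).mp hn
        _ = _ := mul_comm _ _
    have h3 : ‖A * a n‖ ≤ ‖A * a n + B‖ + ‖B‖ := by
      have := norm_add_le (A * a n + B) (-B)
      simpa using this
    rw [norm_mul] at h3
    linarith
  obtain ⟨N, hN⟩ := Filter.eventually_atTop.mp hev
  set θn : ℕ → ℝ :=
    fun n => toIocMod Real.two_pi_pos (Ψ₀ - Real.pi) (Complex.arg (A * a n + B)) with hθndef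
  set T : Finset ℝ := (Finset.range N).image θn with hTdef
  obtain ⟨Ψ', hΨ'mem, hΨ'T⟩ :=
    (Set.Ioo_infinite (show Ψ₀ - δ/2 < Ψ₀ + δ/2 by linarith)).exists_notMem_finset T
  have hΨ'near : |Ψ' - Ψ₀| < δ/2 :=
    abs_lt.mpr ⟨by linarith [hΨ'mem.1], by linarith [hΨ'mem.2]⟩
  set Sfin : Finset ℝ := insert (δ/2 - |Ψ' - Ψ₀|) (T.image fun t => |Ψ' - t|) with hSfindef
  have hSne : Sfin.Nonempty := ⟨_, Finset.mem_insert_self _ _⟩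
  set ε' : ℝ := Sfin.min' hSne with hε'def
  have hε'pos : 0 < ε' := by
    apply (Finset.lt_min'_iff _ _).mpr
    intro b hb
    rcases Finset.mem_insert.mp hb with rfl | hb
    · linarith
    · obtain ⟨t, ht, rfl⟩ := Finset.mem_image.mp hb
      have hne : Ψ' ≠ t := fun h => hΨ'T (h ▸ ht)
      exact abs_pos.mpr (sub_ne_zero.mpr hne)
  have hε'le1 : ε' ≤ δ/2 - |Ψ' - Ψ₀| := Finset.min'_le _ _ (Finset.mem_insert_self _ _)
  have hε'le : ∀ t ∈ T, ε' ≤ |Ψ' - t| := fun t ht =>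
    Finset.min'_le _ _ (Finset.mem_insert_of_mem (Finset.mem_image_of_mem _ ht))
  have hsub : ∀ θ : ℝ, θ ∈ Set.Ioo (Ψ' - ε') (Ψ' + ε') → θ ∈ Set.Ioo (Ψ₀ - δ/2) (Ψ₀ + δ/2) := by
    intro θ hθ
    have h1 : |θ - Ψ'| < ε' := abs_lt.mpr ⟨by linarith [hθ.1], by linarith [hθ.2]⟩
    have h2 : |θ - Ψ₀| < δ/2 := by
      calc |θ - Ψ₀| ≤ |θ - Ψ'| + |Ψ' - Ψ₀| := abs_sub_le _ _ _
        _ < δ/2 := by linarith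
    exact ⟨by linarith [(abs_lt.mp h2).1], by linarith [(abs_lt.mp h2).2]⟩
  set d : ℤ := toIcoDiv Real.two_pi_pos (-Real.pi) Ψ' with hddef
  set Ψ'' : ℝ := toIcoMod Real.two_pi_pos (-Real.pi) Ψ' with hΨ''def
  have hΨ''eq : Ψ'' = Ψ' + 2*Real.pi*((-d : ℤ):ℝ) := by
    have h0 : Ψ'' = Ψ' - d • (2*Real.pi) := rfl
    rw [h0, zsmul_eq_mul]; push_cast; ring
  have hsec_eq : sector Ψ'' ε' = sector Ψ' ε' := sector_congr (-d) hΨ''eq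
  have hΨ''mem : Ψ'' ∈ Set.Ico (-Real.pi) Real.pi := by
    have h := toIcoMod_mem_Ico Real.two_pi_pos (-Real.pi) Ψ'
    rw [show -Real.pi + 2*Real.pi = Real.pi by ring] at h
    exact h
  refine ⟨Ψ'', hΨ''mem, ε', hε'pos, R, hRpos, ?_, ?_⟩
  · intro n hmem
    rw [hsec_eq] at hmem
    obtain ⟨hne, θ, hθint, hform⟩ := mem_sector_iff.mp hmem
    by_cases hnN : N ≤ n
    · have hR : R ≤ ‖A * a n + B‖ := hN n hnN
      obtain ⟨w, hw, heq⟩ := key (A * a n + B) hR θ (hsub θ hθint) hform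
      have haw : a n = w := by
        apply mul_left_cancel₀ hA
        have : A * a n + B = A * w + B := heq
        linear_combination this
      exact hsector n (haw ▸ hw)
    · push_neg at hnN
      have hne' : (‖A * a n + B‖ : ℂ) ≠ 0 := by
        simpa using hlam n
      have hexp : Complex.exp ((θ:ℂ)*Complex.I)
          = Complex.exp ((Complex.arg (A * a n + B) : ℂ)*Complex.I) := by
        apply mul_left_cancel₀ hne'
        rw [← hform, Complex.norm_mul_exp_arg_mul_I]
      obtain ⟨m, hm⟩ := Complex.exp_eq_exp_iff_exists_int.mp hexp
      have hmr : θ = Complex.arg (A * a n + B) + 2*Real.pi*(m:ℝ) := by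
        have hc : ((θ : ℝ) : ℂ) = ((Complex.arg (A * a n + B) + 2*Real.pi*(m:ℝ) : ℝ) : ℂ) := by
          apply mul_right_cancel₀ Complex.I_ne_zero
          rw [hm]; push_cast; ring
        exact_mod_cast hc
      set e : ℤ := toIocDiv Real.two_pi_pos (Ψ₀ - Real.pi) (Complex.arg (A * a n + B)) with hedef
      have hθnn : θn n = Complex.arg (A * a n + B) - e • (2*Real.pi) := rfl
      have hθnIoc : θn n ∈ Set.Ioc (Ψ₀ - Real.pi) ((Ψ₀ - Real.pi) + 2*Real.pi) :=
        toIocMod_mem_Ioc _ _ _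
      have hθ0 := hsub θ hθint
      have hdiff : θ - θn n = 2*Real.pi*(((m + e : ℤ)):ℝ) := by
        rw [hmr, hθnn, zsmul_eq_mul]; push_cast; ring
      have hbound : |θ - θn n| < 2*Real.pi := by
        have h1 := hθnIoc.1
        have h2 := hθnIoc.2
        have h3 := hθ0.1
        have h4 := hθ0.2
        rw [abs_lt]
        constructor <;> linarith
      have hme : (m + e : ℤ) = 0 := by
        rw [hdiff, abs_mul, abs_of_pos Real.two_pi_pos] at hbound
        have h2 : |((m+e:ℤ):ℝ)| < 1 := by nlinarith [Real.two_pi_pos, abs_nonneg ((m+e:ℤ):ℝ)]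
        exact Int.abs_lt_one_iff.mp (by exact_mod_cast h2)
      have hθeq : θ = θn n := by
        have : θ - θn n = 0 := by rw [hdiff, hme]; simp
        linarith
      have hTn : θn n ∈ T := Finset.mem_image_of_mem _ (Finset.mem_range.mpr hnN)
      have hle := hε'le _ hTn
      have hlt : |Ψ' - θ| < ε' := abs_lt.mpr ⟨by linarith [hθint.2], by linarith [hθint.1]⟩
      rw [hθeq] at hlt
      linarith
  · intro z hz hRz
    rw [hsec_eq] at hz
    obtain ⟨hne, θ, hθint, hform⟩ := mem_sector_iff.mp hz
    exact key z hRz θ (hsub θ hθint) hform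
end

section
/- For every positive integer n, the Riemann zeta function satisfies ζ(2n) = (−1)^{n+1}·n·π^{2n}/(2n+1)! + ∑_{ℓ=1}^{n−1} (−1)^{n−ℓ+1}·(π^{2(n−ℓ)}/(2(n−ℓ)+1)!)·ζ(2ℓ). -/
open Finset Nat PowerSeries in
private lemma exp_sub_one_ne_zero' : exp ℚ - 1 ≠ 0 := by
  intro h
  have := congrArg (coeff 1) h
  simp [coeff_exp] at this

open Finset Nat PowerSeries in
private lemma rescale_two_bernoulli_mul :
    rescale (2 : ℚ) (bernoulliPowerSeries ℚ) * (exp ℚ + 1) = C (2:ℚ) * bernoulliPowerSeries ℚ := by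
  apply mul_right_cancel₀ exp_sub_one_ne_zero'
  have h1 := bernoulliPowerSeries_mul_exp_sub_one ℚ
  have h2 : rescale (2 : ℚ) (exp ℚ) = exp ℚ ^ 2 := by
    rw [exp_pow_eq_rescale_exp]; norm_num
  calc rescale (2:ℚ) (bernoulliPowerSeries ℚ) * (exp ℚ + 1) * (exp ℚ - 1)
      = rescale (2:ℚ) (bernoulliPowerSeries ℚ) * (rescale (2:ℚ) (exp ℚ) - 1) := by
        rw [h2]; ring
    _ = rescale (2:ℚ) (bernoulliPowerSeries ℚ * (exp ℚ - 1)) := by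
        rw [map_mul, map_sub, map_one]
    _ = C (2:ℚ) * X := by rw [h1, rescale_X]
    _ = C (2:ℚ) * (bernoulliPowerSeries ℚ * (exp ℚ - 1)) := by rw [h1]
    _ = C (2:ℚ) * bernoulliPowerSeries ℚ * (exp ℚ - 1) := by ring

open Finset Nat PowerSeries in
private lemma sum_choose_two_pow_bernoulli (m : ℕ) :
    ∑ k ∈ range (m + 1), (m.choose k : ℚ) * 2 ^ k * bernoulli k
      = (2 - 2 ^ m) * bernoulli m := by
  have h := congrArg (PowerSeries.coeff m) rescale_two_bernoulli_mul
  rw [coeff_mul, Nat.sum_antidiagonal_eq_sum_range_succ_mk] at h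
  simp only [coeff_rescale, bernoulliPowerSeries, coeff_mk, map_add, coeff_exp, coeff_one,
    coeff_C_mul, eq_ratCast, Rat.cast_id, mul_add] at h
  rw [Finset.sum_add_distrib] at h
  have h2 : ∑ k ∈ range (m+1), (2:ℚ)^k * (bernoulli k / k !) * (if m - k = 0 then 1 else 0)
      = 2 ^ m * (bernoulli m / m !) := by
    rw [Finset.sum_eq_single m]
    · simp
    · intro k hk hkm
      rw [if_neg (by simp only [mem_range] at hk; omega), mul_zero]
    · intro hmem; exact absurd (self_mem_range_succ m) hmem
  rw [h2] at h
  have h3 : ∑ k ∈ range (m+1), (2:ℚ)^k * (bernoulli k / k !) * (1/(m-k)!)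
      = (2 - 2 ^ m) * bernoulli m / m ! := by
    have := eq_sub_of_add_eq h
    rw [this]; ring
  have hm : (m ! : ℚ) ≠ 0 := by exact_mod_cast m.factorial_ne_zero
  calc ∑ k ∈ range (m+1), (m.choose k : ℚ) * 2 ^ k * bernoulli k
      = ∑ k ∈ range (m+1), (m ! : ℚ) * ((2:ℚ)^k * (bernoulli k / k !) * (1/(m-k)!)) := by
        refine sum_congr rfl fun k hk => ?_
        rw [Nat.cast_choose ℚ (mem_range_succ_iff.mp hk)]
        have hk1 : (k ! : ℚ) ≠ 0 := by exact_mod_cast k.factorial_ne_zero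
        have hk2 : ((m-k) ! : ℚ) ≠ 0 := by exact_mod_cast (m-k).factorial_ne_zero
        field_simp
    _ = (m ! : ℚ) * ((2 - 2 ^ m) * bernoulli m / m !) := by rw [← Finset.mul_sum, h3]
    _ = (2 - 2 ^ m) * bernoulli m := by field_simp

open Finset Nat in
private lemma pair_sum (f : ℕ → ℚ) (M : ℕ) :
    ∑ k ∈ range (2 * M), f k = ∑ i ∈ range M, (f (2 * i) + f (2 * i + 1)) := by
  induction M with
  | zero => simp
  | succ M ih =>
      have : 2 * (M + 1) = 2 * M + 1 + 1 := by ring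
      rw [this, sum_range_succ, sum_range_succ, ih, sum_range_succ]
      ring

open Finset Nat in
private lemma bernoulli_odd (k : ℕ) (hk : 1 ≤ k) : bernoulli (2 * k + 1) = 0 := by
  rw [bernoulli_eq_bernoulli'_of_ne_one (by omega)]
  exact bernoulli'_eq_zero_of_odd ⟨k, by ring⟩ (by omega)

open Finset Nat in
private lemma sum_even_choose_two_pow_bernoulli (m : ℕ) :
    ∑ ℓ ∈ Finset.Icc 1 (m + 1),
        (((2 * (m + 1) + 1).choose (2 * ℓ)) : ℚ) * 2 ^ (2 * ℓ) * bernoulli (2 * ℓ)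
      = 2 * (m + 1) := by
  set N := m + 1 with hN
  set f : ℕ → ℚ := fun k => (((2 * N + 1).choose k : ℚ)) * 2 ^ k * bernoulli k with hf
  have h0 : ∑ k ∈ range (2 * N + 1 + 1), f k = 0 := by
    rw [sum_choose_two_pow_bernoulli (2 * N + 1), bernoulli_odd N (by omega), mul_zero]
  have h1 : 2 * N + 1 + 1 = 2 * (N + 1) := by ring
  rw [h1, pair_sum, sum_range_succ'] at h0
  have h2 : ∀ i ∈ range N, (f (2 * (i + 1)) + f (2 * (i + 1) + 1)) = f (2 * (i + 1)) := by
    intro i _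
    have : f (2 * (i + 1) + 1) = 0 := by
      rw [hf]; simp only
      rw [bernoulli_odd (i + 1) (by omega), mul_zero]
    rw [this, add_zero]
  rw [sum_congr rfl h2] at h0
  have h3 : f (2 * 0) + f (2 * 0 + 1) = 1 - (2 * N + 1) := by
    rw [hf]; simp only
    norm_num [bernoulli_one]
    ring
  rw [h3] at h0
  rw [← Finset.Ico_add_one_right_eq_Icc, Finset.sum_Ico_eq_sum_range]
  have h4 : N + 1 - 1 = N := rfl
  rw [h4]
  have h5 : ∀ i ∈ range N, (((2 * N + 1).choose (2 * (1 + i))) : ℚ) * 2 ^ (2 * (1 + i)) *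
      bernoulli (2 * (1 + i)) = f (2 * (i + 1)) := by
    intro i _
    rw [hf]; simp only [add_comm 1 i]
  rw [sum_congr rfl h5]
  have := eq_sub_of_add_eq h0
  rw [this]; push_cast; rw [hN]; push_cast; ring

open Finset Nat in
private lemma bernoulli_recursion_rat (m : ℕ) :
    (2:ℚ) ^ (2 * m + 1) * bernoulli (2 * (m + 1)) / (2 * (m + 1))!
      + ∑ ℓ ∈ Finset.Icc 1 m,
          (2:ℚ) ^ (2 * ℓ - 1) * bernoulli (2 * ℓ) / ((2 * ℓ)! * (2 * (m + 1 - ℓ) + 1)!)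
    = (m + 1) / (2 * (m + 1) + 1)! := by
  have key : ((2 * (m + 1) + 1)! : ℚ) * 2 *
      ∑ ℓ ∈ Finset.Icc 1 (m + 1),
        (2:ℚ) ^ (2 * ℓ - 1) * bernoulli (2 * ℓ) / ((2 * ℓ)! * (2 * (m + 1 - ℓ) + 1)!)
      = 2 * (m + 1) := by
    rw [Finset.mul_sum, ← sum_even_choose_two_pow_bernoulli m]
    refine sum_congr rfl fun ℓ hℓ => ?_
    simp only [mem_Icc] at hℓ
    obtain ⟨j, hj⟩ : ∃ j, 2 * ℓ = j + 1 := ⟨2 * ℓ - 1, by omega⟩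
    have hsub : 2 * (m + 1) + 1 - 2 * ℓ = 2 * (m + 1 - ℓ) + 1 := by omega
    rw [Nat.cast_choose ℚ (by omega : 2 * ℓ ≤ 2 * (m + 1) + 1), hsub, hj]
    have e1 : ((j + 1)! : ℚ) ≠ 0 := by exact_mod_cast (j+1).factorial_ne_zero
    have e2 : (((2 * (m + 1 - ℓ) + 1))! : ℚ) ≠ 0 := by
      exact_mod_cast (2 * (m + 1 - ℓ) + 1).factorial_ne_zero
    have e3 : ((2 * (m + 1) + 1)! : ℚ) ≠ 0 := by
      exact_mod_cast (2 * (m + 1) + 1).factorial_ne_zero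
    simp only [Nat.add_sub_cancel]
    field_simp
    ring
  have hfac : ((2 * (m + 1) + 1)! : ℚ) ≠ 0 := by
    exact_mod_cast (2 * (m + 1) + 1).factorial_ne_zero
  have hsum : ∑ ℓ ∈ Finset.Icc 1 (m + 1),
      (2:ℚ) ^ (2 * ℓ - 1) * bernoulli (2 * ℓ) / ((2 * ℓ)! * (2 * (m + 1 - ℓ) + 1)!)
      = (m + 1) / (2 * (m + 1) + 1)! := by
    field_simp at key ⊢
    linarith [key]
  rw [← Finset.Ico_add_one_right_eq_Icc, Finset.sum_Ico_succ_top (by omega), Finset.Ico_add_one_right_eq_Icc] at hsum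
  have h1 : 2 * (m + 1) - 1 = 2 * m + 1 := by omega
  have h2 : m + 1 - (m + 1) = 0 := by omega
  rw [h1, h2] at hsum
  rw [← hsum]
  simp [Nat.factorial]
  ring

/-- **Recursion for the Riemann zeta function at even positive integers** (Section 5.1).
For every positive integer `n`,
`ζ(2n) = (−1)^{n+1}·n·π^{2n}/(2n+1)! + ∑_{ℓ=1}^{n−1} (−1)^{n−ℓ+1}·(π^{2(n−ℓ)}/(2(n−ℓ)+1)!)·ζ(2ℓ)`. -/
theorem riemannZeta_two_mul_recursion (n : ℕ) (hn : 1 ≤ n) :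
    riemannZeta (2 * n) =
      (-1 : ℂ) ^ (n + 1) * (n : ℂ) * (Real.pi : ℂ) ^ (2 * n) /
          (Nat.factorial (2 * n + 1) : ℂ) +
        ∑ ℓ ∈ Finset.Icc 1 (n - 1),
          (-1 : ℂ) ^ (n - ℓ + 1) *
            ((Real.pi : ℂ) ^ (2 * (n - ℓ)) / (Nat.factorial (2 * (n - ℓ) + 1) : ℂ)) *
            riemannZeta (2 * ℓ) := by
  obtain ⟨m, rfl⟩ := Nat.exists_eq_succ_of_ne_zero (by omega : n ≠ 0)
  simp only [Nat.succ_eq_add_one]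
  have hms : m + 1 - 1 = m := rfl
  rw [hms]
  rw [riemannZeta_two_mul_nat (Nat.succ_ne_zero m)]
  have hterm : ∀ ℓ ∈ Finset.Icc 1 m,
      (-1 : ℂ) ^ (m + 1 - ℓ + 1) *
          ((Real.pi : ℂ) ^ (2 * (m + 1 - ℓ)) / (Nat.factorial (2 * (m + 1 - ℓ) + 1) : ℂ)) *
          riemannZeta (2 * ℓ)
        = (-1 : ℂ) ^ (m + 1 + 1) * (Real.pi : ℂ) ^ (2 * (m + 1)) *
            -((((2:ℚ) ^ (2 * ℓ - 1) * bernoulli (2 * ℓ) /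
                ((2 * ℓ).factorial * (2 * (m + 1 - ℓ) + 1).factorial) : ℚ) : ℂ)) := by
    intro ℓ hℓ
    simp only [Finset.mem_Icc] at hℓ
    rw [riemannZeta_two_mul_nat (by omega : ℓ ≠ 0)]
    obtain ⟨k, hk, hk1⟩ : ∃ k, m + 1 - ℓ = k ∧ ℓ + k = m + 1 := ⟨m + 1 - ℓ, rfl, by omega⟩
    rw [hk, ← hk1]
    obtain ⟨j, hj⟩ : ∃ j, 2 * ℓ = j + 1 := ⟨2 * ℓ - 1, by omega⟩
    rw [hj]
    simp only [Nat.add_sub_cancel]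
    have e1 : ((j + 1).factorial : ℂ) ≠ 0 := by exact_mod_cast (j+1).factorial_ne_zero
    have e2 : (((2 * k + 1)).factorial : ℂ) ≠ 0 := by
      exact_mod_cast (2 * k + 1).factorial_ne_zero
    push_cast
    rw [show 2 * (ℓ + k) = 2 * ℓ + 2 * k from by ring, hj]
    simp only [pow_add]
    field_simp
  rw [Finset.sum_congr rfl hterm, ← Finset.mul_sum]
  rw [Finset.sum_neg_distrib, ← Rat.cast_sum]
  have hq : (∑ ℓ ∈ Finset.Icc 1 m,
      ((2:ℚ) ^ (2 * ℓ - 1) * bernoulli (2 * ℓ) /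
        ((2 * ℓ).factorial * (2 * (m + 1 - ℓ) + 1).factorial)))
      = (m + 1) / (2 * (m + 1) + 1).factorial
        - (2:ℚ) ^ (2 * m + 1) * bernoulli (2 * (m + 1)) / (2 * (m + 1)).factorial := by
    have := bernoulli_recursion_rat m
    linarith [this]
  rw [hq]
  have h1 : 2 * (m + 1) - 1 = 2 * m + 1 := by omega
  rw [h1]
  have e3 : (((2 * (m + 1))).factorial : ℂ) ≠ 0 := by
    exact_mod_cast (2 * (m + 1)).factorial_ne_zero
  have e4 : (((2 * (m + 1) + 1)).factorial : ℂ) ≠ 0 := by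
    exact_mod_cast (2 * (m + 1) + 1).factorial_ne_zero
  push_cast
  field_simp
  ring
end
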